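/- For ρ ∈ (1,2) and λ > 0, the function s(t) = E_ρ(−λ t^ρ), where E_ρ is the one-parameter Mittag-Leffler function, satisfies s(0) = 1 and the Volterra equation s'(t) + (λ/Γ(ρ−1)) ∫₀ᵗ (t−τ)^{ρ−2} s(τ) dτ = 0 for t > 0. -/

import Mathlib

open MeasureTheory

/-- The one-parameter Mittag-Leffler function `E_ρ(z) = Σ_k z^k/Γ(ρk+1)`. -/
noncomputable def mittagLeffler (ρ z : ℝ) : ℝ :=
  ∑' k : ℕ, z ^ k / Real.Gamma (ρ * k + 1)


lemma summable_gamma_series (ρ c b : ℝ) (hρ : 1 ≤ ρ) (hc : 0 < c) (hb : 0 ≤ b) :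
    Summable (fun k : ℕ => b ^ k / Real.Gamma (ρ * k + c)) := by
  apply summable_of_ratio_norm_eventually_le (r := 1/2) (by norm_num)
  have hN : ∃ N : ℕ, (2:ℝ) ≤ N ∧ 2 * b ≤ N := by
    obtain ⟨N, hN⟩ := exists_nat_ge (max 2 (2*b))
    exact ⟨N, le_trans (le_max_left _ _) hN, le_trans (le_max_right _ _) hN⟩
  obtain ⟨N, hN2, hNb⟩ := hN
  filter_upwards [Filter.eventually_ge_atTop N] with k hk
  have hkN : (N:ℝ) ≤ k := Nat.cast_le.mpr hk
  have hkρ : (k:ℝ) ≤ ρ * k := by nlinarith [Nat.cast_nonneg (α := ℝ) k]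
  set x := ρ * k + c with hx
  have hx2 : 2 ≤ x := by nlinarith
  have hxb : 2 * b ≤ x := by nlinarith
  have hx0 : 0 < x := by linarith
  have hxΓ : 0 < Real.Gamma x := Real.Gamma_pos_of_pos hx0
  have harg : ρ * ((k:ℕ)+1 : ℕ) + c = ρ * k + c + ρ := by push_cast; ring
  have hmono : x * Real.Gamma x ≤ Real.Gamma (ρ * ((k:ℕ)+1 : ℕ) + c) := by
    rw [← Real.Gamma_add_one (by linarith : x ≠ 0), harg]
    exact Real.Gamma_strictMonoOn_Ici.monotoneOn (by simp only [Set.mem_Ici]; linarith)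
      (by simp only [Set.mem_Ici]; linarith) (by linarith)
  have hΓ' : 0 < Real.Gamma (ρ * ((k:ℕ)+1 : ℕ) + c) :=
    Real.Gamma_pos_of_pos (by rw [harg]; linarith)
  rw [Real.norm_eq_abs, Real.norm_eq_abs, abs_div, abs_div, abs_pow, abs_pow,
    abs_of_nonneg hb, abs_of_pos hΓ', abs_of_pos hxΓ]
  rw [div_le_iff₀ hΓ', pow_succ]
  have hbk : (0:ℝ) ≤ b ^ k := pow_nonneg hb k
  have h1 : 1/2 * (b^k/Real.Gamma x) * (x * Real.Gamma x)
      ≤ 1/2 * (b^k/Real.Gamma x) * Real.Gamma (ρ * ((k:ℕ)+1 : ℕ) + c) :=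
    mul_le_mul_of_nonneg_left hmono (by positivity)
  have h2 : 1/2 * (b^k/Real.Gamma x) * (x * Real.Gamma x) = 1/2 * b^k * x := by
    field_simp
  nlinarith

lemma real_beta (a b t : ℝ) (ha : 0 < a) (hb : 0 < b) (ht : 0 < t) :
    ∫ τ in (0:ℝ)..t, τ ^ (a - 1) * (t - τ) ^ (b - 1)
      = t ^ (a + b - 1) * (Real.Gamma a * Real.Gamma b / Real.Gamma (a + b)) := by
  have hG : (0:ℝ) < Real.Gamma (a + b) := Real.Gamma_pos_of_pos (by linarith)
  have hbeta : Complex.betaIntegral (a:ℂ) (b:ℂ)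
      = ((Real.Gamma a * Real.Gamma b / Real.Gamma (a + b) : ℝ) : ℂ) := by
    have h := Complex.Gamma_mul_Gamma_eq_betaIntegral (s := (a:ℂ)) (t := (b:ℂ))
      (by simpa using ha) (by simpa using hb)
    have hab : ((a:ℂ) + b) = ((a + b : ℝ) : ℂ) := by push_cast; ring
    rw [Complex.Gamma_ofReal, Complex.Gamma_ofReal, hab, Complex.Gamma_ofReal] at h
    have hne : ((Real.Gamma (a + b) : ℝ) : ℂ) ≠ 0 := by
      exact_mod_cast hG.ne'
    rw [Complex.ofReal_div, Complex.ofReal_mul, eq_div_iff hne]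
    linear_combination -h
  have hscaled := Complex.betaIntegral_scaled (a:ℂ) (b:ℂ) ht
  have hcongr : (∫ x in (0:ℝ)..t, (x:ℂ) ^ ((a:ℂ) - 1) * ((t:ℂ) - x) ^ ((b:ℂ) - 1))
      = ((∫ τ in (0:ℝ)..t, τ ^ (a - 1) * (t - τ) ^ (b - 1) : ℝ) : ℂ) := by
    rw [← intervalIntegral.integral_ofReal]
    apply intervalIntegral.integral_congr
    intro x hx
    rw [Set.uIcc_of_le ht.le] at hx
    have hx0 : 0 ≤ x := hx.1
    have hx1 : 0 ≤ t - x := by linarith [hx.2]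
    push_cast [Complex.ofReal_cpow hx0, Complex.ofReal_cpow hx1]
    ring
  rw [hcongr, hbeta] at hscaled
  have hT : ((t:ℂ)) ^ ((a:ℂ) + b - 1) = ((t ^ (a + b - 1) : ℝ) : ℂ) := by
    rw [Complex.ofReal_cpow ht.le]
    push_cast; ring_nf
  rw [hT] at hscaled
  exact_mod_cast hscaled

lemma rpow_nat_mul (x ρ : ℝ) (hx : 0 ≤ x) (k : ℕ) : x ^ (ρ * k) = (x ^ ρ) ^ k := by
  rw [Real.rpow_mul hx, Real.rpow_natCast]

lemma ml_expand (ρ lam x : ℝ) (hx : 0 ≤ x) :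
    mittagLeffler ρ (-lam * x ^ ρ)
      = ∑' k : ℕ, (-lam) ^ k * x ^ (ρ * k) / Real.Gamma (ρ * k + 1) := by
  unfold mittagLeffler
  apply tsum_congr; intro k
  rw [mul_pow, rpow_nat_mul x ρ hx]

/-- For `ρ ∈ (1,2)` and `λ > 0`, `s(t) = E_ρ(−λ t^ρ)` satisfies
`s(0) = 1` and `s'(t) + (λ/Γ(ρ−1)) ∫₀ᵗ (t−τ)^{ρ−2} s(τ) dτ = 0` for `t > 0`. -/
theorem mittagLeffler_solves_volterra (ρ lam : ℝ) (hρ1 : 1 < ρ) (hρ2 : ρ < 2)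
    (hlam : 0 < lam) :
    (fun t : ℝ => mittagLeffler ρ (-lam * t ^ ρ)) 0 = 1 ∧
    ∀ t > (0:ℝ),
      HasDerivAt (fun t : ℝ => mittagLeffler ρ (-lam * t ^ ρ))
        (-(lam / Real.Gamma (ρ - 1)) *
          ∫ τ in (0:ℝ)..t, (t - τ) ^ (ρ - 2) * mittagLeffler ρ (-lam * τ ^ ρ)) t := by
  have hρ0 : 0 < ρ := by linarith
  constructor
  · show mittagLeffler ρ (-lam * (0:ℝ) ^ ρ) = 1
    rw [Real.zero_rpow (ne_of_gt hρ0), mul_zero, mittagLeffler]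
    rw [tsum_eq_single 0]
    · norm_num [Real.Gamma_one]
    · intro k hk
      rw [zero_pow hk, zero_div]
  · intro t ht
    set M : ℝ := t + 1 with hM
    have hM1 : 1 ≤ M := by simp [hM]; linarith
    have hM0 : 0 < M := by linarith
    have htM : t ∈ Set.Ioo (0:ℝ) M := ⟨ht, by simp [hM]⟩
    have hΓk : ∀ k : ℕ, 0 < Real.Gamma (ρ * k + 1) := fun k =>
      Real.Gamma_pos_of_pos (by positivity)
    have hΓkρ : ∀ k : ℕ, 0 < Real.Gamma (ρ * k + ρ) := fun k =>
      Real.Gamma_pos_of_pos (by positivity)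
    have hΓρ1 : 0 < Real.Gamma (ρ - 1) := Real.Gamma_pos_of_pos (by linarith)
    set f : ℕ → ℝ → ℝ :=
      fun k x => (-lam) ^ k * x ^ (ρ * k) / Real.Gamma (ρ * k + 1) with hf
    set f' : ℕ → ℝ → ℝ :=
      fun k x => (-lam) ^ k * ((ρ * k) * x ^ (ρ * k - 1)) / Real.Gamma (ρ * k + 1) with hf'
    set u : ℕ → ℝ :=
      fun k => lam ^ k * ((ρ * k) * M ^ (ρ * k)) / Real.Gamma (ρ * k + 1) with hu
    -- Summability of the derivative bounds
    have hUsum : Summable u := by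
      rw [← summable_nat_add_iff 1]
      have e : (fun k : ℕ => u (k + 1))
          = fun k : ℕ => (lam * M ^ ρ) * ((lam * M ^ ρ) ^ k / Real.Gamma (ρ * k + ρ)) := by
        funext k
        simp only [hu]
        have h1 : (((k : ℕ) + 1 : ℕ) : ℝ) = (k : ℝ) + 1 := by push_cast; ring
        rw [h1]
        have hz : ρ * ((k : ℝ) + 1) ≠ 0 := by positivity
        rw [Real.Gamma_add_one hz]
        have hM' : M ^ (ρ * ((k:ℝ) + 1)) = M ^ (ρ * (k:ℝ)) * M ^ ρ := by
          rw [mul_add, mul_one, Real.rpow_add hM0]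
        have hMk : M ^ (ρ * (k:ℝ)) = (M ^ ρ) ^ k := rpow_nat_mul M ρ hM0.le k
        have hΓe : Real.Gamma (ρ * ((k:ℝ) + 1)) = Real.Gamma (ρ * (k:ℝ) + ρ) := by ring_nf
        rw [hM', hMk, hΓe, pow_succ, mul_pow]
        have hne1 : ρ * ((k:ℝ) + 1) ≠ 0 := hz
        have hne2 : Real.Gamma (ρ * (k:ℝ) + ρ) ≠ 0 := (hΓkρ k).ne'
        field_simp
      rw [e]
      exact ((summable_gamma_series ρ ρ (lam * M ^ ρ) hρ1.le hρ0 (by positivity)).mul_left _)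
    -- termwise derivatives
    have hderiv : ∀ (k : ℕ) (y : ℝ), y ∈ Set.Ioo (0:ℝ) M → HasDerivAt (f k) (f' k y) y := by
      intro k y hy
      have h := Real.hasDerivAt_rpow_const (x := y) (p := ρ * k) (Or.inl (ne_of_gt hy.1))
      exact (h.const_mul ((-lam) ^ k)).div_const (Real.Gamma (ρ * k + 1))
    -- bounds
    have hbound : ∀ (k : ℕ) (y : ℝ), y ∈ Set.Ioo (0:ℝ) M → ‖f' k y‖ ≤ u k := by
      intro k y hy
      rcases Nat.eq_zero_or_pos k with rfl | hk
      · simp [hf', hu]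
      · have hyM : y ^ (ρ * k - 1) ≤ M ^ (ρ * k) := by
          have hk1 : (1:ℝ) ≤ k := Nat.one_le_cast.mpr hk
          have hexp : 0 ≤ ρ * k - 1 := by nlinarith
          calc y ^ (ρ * k - 1) ≤ M ^ (ρ * k - 1) :=
                Real.rpow_le_rpow hy.1.le hy.2.le hexp
            _ ≤ M ^ (ρ * k) := Real.rpow_le_rpow_of_exponent_le hM1 (by linarith)
        simp only [hf', hu, Real.norm_eq_abs, abs_div, abs_mul, abs_pow, abs_neg,
          abs_of_pos hlam, abs_of_pos (hΓk k),
          abs_of_nonneg (by positivity : (0:ℝ) ≤ ρ * k),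
          abs_of_nonneg (Real.rpow_nonneg hy.1.le (ρ * k - 1))]
        gcongr
    -- summability at t
    have hfsum : Summable (fun k => f k t) := by
      apply Summable.of_abs
      have e : (fun k => |f k t|)
          = fun k : ℕ => (lam * t ^ ρ) ^ k / Real.Gamma (ρ * k + 1) := by
        funext k
        simp only [hf, abs_div, abs_mul, abs_pow, abs_neg, abs_of_pos hlam,
          abs_of_pos (hΓk k), abs_of_nonneg (Real.rpow_nonneg ht.le (ρ * k))]
        rw [mul_pow, rpow_nat_mul t ρ ht.le]
      rw [e]
      exact summable_gamma_series ρ 1 (lam * t ^ ρ) hρ1.le one_pos (by positivity)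
    have hD : HasDerivAt (fun z => ∑' k, f k z) (∑' k, f' k t) t :=
      hasDerivAt_tsum_of_isPreconnected hUsum isOpen_Ioo isPreconnected_Ioo
        hderiv hbound htM hfsum htM
    have hEq : (fun y : ℝ => mittagLeffler ρ (-lam * y ^ ρ)) =ᶠ[nhds t]
        (fun z => ∑' k, f k z) := by
      filter_upwards [isOpen_Ioo.mem_nhds htM] with y hy
      exact ml_expand ρ lam y hy.1.le
    have hD' : HasDerivAt (fun y : ℝ => mittagLeffler ρ (-lam * y ^ ρ)) (∑' k, f' k t) t :=
      hD.congr_of_eventuallyEq hEq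
    -- Beta integral values
    have hJ : ∀ k : ℕ, ∫ τ in (0:ℝ)..t, τ ^ (ρ * k) * (t - τ) ^ (ρ - 2)
        = t ^ (ρ * k + ρ - 1) *
          (Real.Gamma (ρ * k + 1) * Real.Gamma (ρ - 1) / Real.Gamma (ρ * k + ρ)) := by
      intro k
      have h := real_beta (ρ * k + 1) (ρ - 1) t (by positivity) (by linarith) ht
      rw [show ρ * (k:ℝ) + 1 - 1 = ρ * k by ring, show ρ - 1 - 1 = ρ - 2 by ring,
        show ρ * (k:ℝ) + 1 + (ρ - 1) - 1 = ρ * k + ρ - 1 by ring,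
        show ρ * (k:ℝ) + 1 + (ρ - 1) = ρ * k + ρ by ring] at h
      exact h
    set g : ℕ → ℝ → ℝ :=
      fun k τ => (t - τ) ^ (ρ - 2) * ((-lam) ^ k * τ ^ (ρ * k) / Real.Gamma (ρ * k + 1))
      with hg
    have hIcont : ∀ k : ℕ, IntervalIntegrable (g k) volume 0 t := by
      intro k
      apply IntervalIntegrable.mul_continuousOn
      · have h1 : IntervalIntegrable (fun x : ℝ => x ^ (ρ - 2)) volume 0 t :=
          intervalIntegral.intervalIntegrable_rpow' (by linarith)
        have h2 := h1.comp_sub_left t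
        simpa using h2.symm
      · exact ((continuous_const.mul
          (Real.continuous_rpow_const (by positivity : (0:ℝ) ≤ ρ * k))).div_const
          (Real.Gamma (ρ * k + 1))).continuousOn
    have hgInt : ∀ k, IntegrableOn (g k) (Set.Ioc 0 t) volume := fun k =>
      (intervalIntegrable_iff_integrableOn_Ioc_of_le ht.le).mp (hIcont k)
    have hterm : ∀ k : ℕ, ∫ τ in (0:ℝ)..t, g k τ
        = (-lam) ^ k / Real.Gamma (ρ * k + 1) *
          (t ^ (ρ * k + ρ - 1) *
            (Real.Gamma (ρ * k + 1) * Real.Gamma (ρ - 1) / Real.Gamma (ρ * k + ρ))) := by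
      intro k
      have e : g k = fun τ =>
          (-lam) ^ k / Real.Gamma (ρ * k + 1) * (τ ^ (ρ * k) * (t - τ) ^ (ρ - 2)) := by
        funext τ; simp only [hg]; ring
      rw [e, intervalIntegral.integral_const_mul, hJ k]
    have hnorm : ∀ k : ℕ, (∫ τ in Set.Ioc (0:ℝ) t, ‖g k τ‖)
        = lam ^ k / Real.Gamma (ρ * k + 1) *
          (t ^ (ρ * k + ρ - 1) *
            (Real.Gamma (ρ * k + 1) * Real.Gamma (ρ - 1) / Real.Gamma (ρ * k + ρ))) := by
      intro k
      have e1 : Set.EqOn (fun τ => ‖g k τ‖)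
          (fun τ => lam ^ k / Real.Gamma (ρ * k + 1) * (τ ^ (ρ * k) * (t - τ) ^ (ρ - 2)))
          (Set.Ioc 0 t) := by
        intro τ hτ
        simp only [hg, Real.norm_eq_abs, abs_mul, abs_div, abs_pow, abs_neg,
          abs_of_pos hlam, abs_of_pos (hΓk k),
          abs_of_nonneg (Real.rpow_nonneg (sub_nonneg.mpr hτ.2) (ρ - 2)),
          abs_of_nonneg (Real.rpow_nonneg hτ.1.le (ρ * k))]
        ring
      rw [setIntegral_congr_fun measurableSet_Ioc e1, integral_const_mul,
        ← intervalIntegral.integral_of_le ht.le, hJ k]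
    have hsumnorm : Summable (fun k => ∫ τ in Set.Ioc (0:ℝ) t, ‖g k τ‖) := by
      have e : (fun k => ∫ τ in Set.Ioc (0:ℝ) t, ‖g k τ‖)
          = fun k : ℕ => (Real.Gamma (ρ - 1) * t ^ (ρ - 1)) *
              ((lam * t ^ ρ) ^ k / Real.Gamma (ρ * k + ρ)) := by
        funext k
        rw [hnorm k]
        rw [show ρ * (k:ℝ) + ρ - 1 = ρ * k + (ρ - 1) by ring, Real.rpow_add ht,
          mul_pow, ← rpow_nat_mul t ρ ht.le]
        have hne1 : Real.Gamma (ρ * (k:ℝ) + 1) ≠ 0 := (hΓk k).ne'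
        have hne2 : Real.Gamma (ρ * (k:ℝ) + ρ) ≠ 0 := (hΓkρ k).ne'
        field_simp
      rw [e]
      exact ((summable_gamma_series ρ ρ (lam * t ^ ρ) hρ1.le hρ0 (by positivity)).mul_left _)
    have hswap : (∫ τ in (0:ℝ)..t, (t - τ) ^ (ρ - 2) * mittagLeffler ρ (-lam * τ ^ ρ))
        = ∑' k, ∫ τ in (0:ℝ)..t, g k τ := by
      have e2 : Set.EqOn (fun τ => (t - τ) ^ (ρ - 2) * mittagLeffler ρ (-lam * τ ^ ρ))
          (fun τ => ∑' k, g k τ) (Set.uIcc 0 t) := by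
        intro τ hτ
        rw [Set.uIcc_of_le ht.le] at hτ
        simp only [hg]
        rw [ml_expand ρ lam τ hτ.1, ← tsum_mul_left]
      rw [intervalIntegral.integral_congr e2]
      simp_rw [intervalIntegral.integral_of_le ht.le]
      exact (integral_tsum_of_summable_integral_norm hgInt hsumnorm).symm
    -- assemble the value identity
    have hf'sum : Summable (fun k => f' k t) :=
      Summable.of_norm_bounded hUsum (fun k => hbound k t htM)
    have hVal : (∑' k, f' k t)
        = -(lam / Real.Gamma (ρ - 1)) *
          ∫ τ in (0:ℝ)..t, (t - τ) ^ (ρ - 2) * mittagLeffler ρ (-lam * τ ^ ρ) := by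
      rw [hswap, tsum_congr hterm, ← tsum_mul_left]
      rw [Summable.tsum_eq_zero_add hf'sum]
      have h0 : f' 0 t = 0 := by simp [hf']
      rw [h0, zero_add]
      apply tsum_congr
      intro k
      simp only [hf']
      have hc : (((k:ℕ) + 1 : ℕ) : ℝ) = (k:ℝ) + 1 := by push_cast; ring
      rw [hc]
      have hz : ρ * ((k:ℝ) + 1) ≠ 0 := by positivity
      rw [Real.Gamma_add_one hz]
      have hΓe : Real.Gamma (ρ * ((k:ℝ) + 1)) = Real.Gamma (ρ * (k:ℝ) + ρ) := by ring_nf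
      have hte : t ^ (ρ * ((k:ℝ) + 1) - 1) = t ^ (ρ * (k:ℝ) + ρ - 1) := by ring_nf
      rw [hΓe, hte, pow_succ]
      have hne1 : Real.Gamma (ρ * (k:ℝ) + 1) ≠ 0 := (hΓk k).ne'
      have hne2 : Real.Gamma (ρ * (k:ℝ) + ρ) ≠ 0 := (hΓkρ k).ne'
      have hne3 : Real.Gamma (ρ - 1) ≠ 0 := hΓρ1.ne'
      field_simp
    rwa [hVal] at hD'
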